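/- Let P be a consistent disjunctive extended logic program (a DLPOD in which every rule head is a single disjunction of literals, i.e. n=1, all of whose standard disjunctive answer sets are consistent). Then the answer sets of P in the three-valued DLPOD sense coincide with the standard answer sets of P: M is a three-valued DLPOD answer set of P iff M takes values only in {F,T} and {L : M(L)=T} is a standard disjunctive answer set of P. -/

import Mathlib

/-! Four truth values F < F* < T* < T. -/
inductive V4 : Type
  | F | Fs | Ts | T
  deriving DecidableEq, Repr

instance instFintypeV4 : Fintype V4 :=
  ⟨{V4.F, V4.Fs, V4.Ts, V4.T}, fun x => by cases x <;> simp⟩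

namespace V4

def toNat : V4 → ℕ
  | F => 0
  | Fs => 1
  | Ts => 2
  | T => 3

theorem toNat_injective : Function.Injective toNat := by
  intro a b h
  cases a <;> cases b <;> simp_all [toNat]

instance : LinearOrder V4 := LinearOrder.lift' toNat toNat_injective

instance : BoundedOrder V4 where
  top := T
  le_top a := by cases a <;> decide
  bot := F
  bot_le a := by cases a <;> decide

/-- Negation-as-failure: `not φ` is `T` if `φ ≤ F*`, else `F`. -/
def notv (a : V4) : V4 := if a ≤ Fs then T else F

/-- Ordered disjunction on truth values: `u × v = v` if `u = F*`, else `u`. -/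
def times (a b : V4) : V4 := if a = Fs then b else a

end V4

variable {α : Type}

/-- A ground literal: an atom together with a polarity (`true` = the atom itself,
`false` = its strong negation). -/
structure Lit (α : Type) where
  atom : α
  positive : Bool
  deriving DecidableEq

/-- A (four-valued) interpretation assigns a truth value to every literal.
Three-valued interpretations are the `solid` ones (no `T*` value). -/
abbrev Interp (α : Type) := Lit α → V4

/-- `I` is solid (equivalently, three-valued) if it assigns `T*` to no literal. -/
def solid (I : Interp α) : Prop := ∀ l, I l ≠ V4.Ts

/-- `I` is consistent: no atom has both the atom and its strong negation `T`. -/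
def consistentI (I : Interp α) : Prop :=
  ∀ a : α, ¬ (I ⟨a, true⟩ = V4.T ∧ I ⟨a, false⟩ = V4.T)

/-- `I` takes values only in `{F, T}`. -/
def twoValued (I : Interp α) : Prop := ∀ l, I l = V4.F ∨ I l = V4.T

/-- Value of the conjunction of a list of literals. -/
def evalConj (I : Interp α) (L : List (Lit α)) : V4 := (L.map I).foldr min V4.T

/-- Value of the conjunction `not B1 ∧ ⋯ ∧ not Bk`. -/
def evalNegs (I : Interp α) (L : List (Lit α)) : V4 :=
  (L.map (fun b => V4.notv (I b))).foldr min V4.T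

/-- Value of the disjunction of a list of literals. -/
def evalDisj (I : Interp α) (L : List (Lit α)) : V4 := (L.map I).foldr max V4.F

/-- Value of an ordered disjunction of the given (nonempty) list of values.
(`F*` is a right identity for `×`, so the fold computes `v1 × ⋯ × vn`.) -/
def evalOD (vs : List V4) : V4 := vs.foldr V4.times V4.Fs

/-- Pointwise `≤` on interpretations. -/
def interpLE (I J : Interp α) : Prop := ∀ l, I l ≤ J l

/-- The four-valued relation `⪯`: `u ⪯ v` iff `u = v` or `u ≺ v`, where
`F ≺ F*`, `F ≺ T*`, `F ≺ T` and `T* ≺ T`.  On three-valued (solid)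
interpretations it restricts to the ordering generated by `F ≺ F*`, `F ≺ T`. -/
def preceq (u v : V4) : Prop :=
  u = v ∨ (u = V4.F ∧ v ≠ V4.F) ∨ (u = V4.Ts ∧ v = V4.T)

/-- Pointwise `⪯` on interpretations. -/
def interpPreceq (I J : Interp α) : Prop := ∀ l, preceq (I l) (J l)

/-- The set of literals that are `T` in `I`. -/
def collapse (I : Interp α) : Set (Lit α) := { l | I l = V4.T }

/-! ### LPOD rules -/

/-- An LPOD rule `C1 × ⋯ × Cn ← A1,…,Am, not B1,…,not Bk` with head
`c1 :: cs` (so the head is nonempty). -/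
structure Rule (α : Type) where
  c1 : Lit α
  cs : List (Lit α)
  pos : List (Lit α)
  neg : List (Lit α)

def Rule.headList (R : Rule α) : List (Lit α) := R.c1 :: R.cs

def Rule.headVal (R : Rule α) (I : Interp α) : V4 := evalOD (R.headList.map I)

def Rule.bodyVal (R : Rule α) (I : Interp α) : V4 :=
  min (evalConj I R.pos) (evalNegs I R.neg)

/-- `I` satisfies the rule `R` (the rule evaluates to `T`). -/
def ruleSat (I : Interp α) (R : Rule α) : Prop := R.bodyVal I ≤ R.headVal I

/-- `I` is a model of the LPOD `P`. -/
def isModel (I : Interp α) (P : Set (Rule α)) : Prop := ∀ R ∈ P, ruleSat I R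

/-! ### The ×-reduct of an LPOD -/

/-- A reduct rule `C ← [F*,] A1,…,Am`; `fstar` records whether the constant `F*`
occurs in the body. -/
structure RedRule (α : Type) where
  head : Lit α
  pos : List (Lit α)
  fstar : Bool

def RedRule.bodyVal (r : RedRule α) (I : Interp α) : V4 :=
  min (if r.fstar then V4.Fs else V4.T) (evalConj I r.pos)

def redSat (I : Interp α) (r : RedRule α) : Prop := r.bodyVal I ≤ I r.head

def redModel (I : Interp α) (Q : Set (RedRule α)) : Prop := ∀ r ∈ Q, redSat I r

/-- Reduct rules generated by a head `C1,…,Cn`: rules `Cj ← F*, body` for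
`j < r` and `Cr ← body`, where `r` is the least index with
`I C1 = ⋯ = I C_{r-1} = F*` and (`r = n` or `I Cr ≠ F*`). -/
def xredHead (I : Interp α) (body : List (Lit α)) : List (Lit α) → List (RedRule α)
  | [] => []
  | [c] => [⟨c, body, false⟩]
  | c :: c' :: rest =>
    if I c = V4.Fs then ⟨c, body, true⟩ :: xredHead I body (c' :: rest)
    else [⟨c, body, false⟩]

/-- The ×-reduct of a rule w.r.t. `I`. -/
def xredRule (I : Interp α) (R : Rule α) : List (RedRule α) :=
  if ∃ b ∈ R.neg, I b = V4.T then [] else xredHead I R.pos R.headList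

/-- The ×-reduct of an LPOD w.r.t. `I`. -/
def xreduct (I : Interp α) (P : Set (Rule α)) : Set (RedRule α) :=
  { r | ∃ R ∈ P, r ∈ xredRule I R }

/-- `M` is a three-valued answer set of the LPOD `P`: a consistent three-valued
interpretation that is the `≤`-least (three-valued) model of `P^M_×`. -/
def threeAnswerSet (P : Set (Rule α)) (M : Interp α) : Prop :=
  solid M ∧ consistentI M ∧ redModel M (xreduct M P) ∧
  ∀ N : Interp α, solid N → redModel N (xreduct M P) → interpLE M N

/-! ### Two-valued notions: Brewka answer sets and GL answer sets -/

/-- A set of literals is consistent if it contains no complementary pair. -/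
def twoConsistent (N : Set (Lit α)) : Prop :=
  ∀ a : α, ¬ (Lit.mk a true ∈ N ∧ Lit.mk a false ∈ N)

/-- `N` is a (two-valued) Brewka-model of the LPOD `P`. -/
def brewkaModel (N : Set (Lit α)) (P : Set (Rule α)) : Prop :=
  ∀ R ∈ P, (∀ a ∈ R.pos, a ∈ N) → (∀ b ∈ R.neg, b ∉ N) → ∃ c ∈ R.headList, c ∈ N

/-- A positive rule `C ← A1,…,Am`. -/
structure PosRule (α : Type) where
  head : Lit α
  pos : List (Lit α)

/-- `N` is a two-valued model of a positive program. -/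
def posModel (N : Set (Lit α)) (Q : Set (PosRule α)) : Prop :=
  ∀ r ∈ Q, (∀ a ∈ r.pos, a ∈ N) → r.head ∈ N

/-- The Brewka ×-reduct of an LPOD w.r.t. a set of literals `N`:
`Ci ← A1,…,Am` whenever `Ci ∈ N` and `N ∩ {C1,…,C_{i-1},B1,…,Bk} = ∅`. -/
def brewkaReduct (N : Set (Lit α)) (P : Set (Rule α)) : Set (PosRule α) :=
  { r | ∃ R ∈ P, ∃ l1 l2 : List (Lit α),
      R.headList = l1 ++ r.head :: l2 ∧ r.pos = R.pos ∧ r.head ∈ N ∧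
      (∀ c ∈ l1, c ∉ N) ∧ (∀ b ∈ R.neg, b ∉ N) }

/-- `N` is a Brewka answer set of the LPOD `P`. -/
def brewkaAnswerSet (P : Set (Rule α)) (N : Set (Lit α)) : Prop :=
  twoConsistent N ∧ brewkaModel N P ∧ posModel N (brewkaReduct N P) ∧
  ∀ N', posModel N' (brewkaReduct N P) → N ⊆ N'

/-- The Gelfond–Lifschitz reduct of an extended logic program (an LPOD all
of whose rule heads are single literals) w.r.t. a set of literals `N`. -/
def glReduct (P : Set (Rule α)) (N : Set (Lit α)) : Set (PosRule α) :=
  { r | ∃ R ∈ P, (∀ b ∈ R.neg, b ∉ N) ∧ r.head = R.c1 ∧ r.pos = R.pos }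

/-- `N` is a standard answer set of the extended logic program `P`: a consistent
set of literals that is the least model of `P^N`. -/
def stdAnswerSet (P : Set (Rule α)) (N : Set (Lit α)) : Prop :=
  twoConsistent N ∧ posModel N (glReduct P N) ∧
  ∀ N', posModel N' (glReduct P N) → N ⊆ N'

/-! ### DLPODs -/

/-- A DLPOD rule `𝒞1 × ⋯ × 𝒞n ← A1,…,Am, not B1,…,not Bk`, where each `𝒞i`
is a disjunction of literals; the head is `c1 :: cs` (nonempty). -/
structure DRule (α : Type) where
  c1 : List (Lit α)
  cs : List (List (Lit α))
  pos : List (Lit α)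
  neg : List (Lit α)

def DRule.headList (R : DRule α) : List (List (Lit α)) := R.c1 :: R.cs

def DRule.headVal (R : DRule α) (I : Interp α) : V4 :=
  evalOD (R.headList.map (evalDisj I))

def DRule.bodyVal (R : DRule α) (I : Interp α) : V4 :=
  min (evalConj I R.pos) (evalNegs I R.neg)

def dRuleSat (I : Interp α) (R : DRule α) : Prop := R.bodyVal I ≤ R.headVal I

def isDModel (I : Interp α) (P : Set (DRule α)) : Prop := ∀ R ∈ P, dRuleSat I R

/-- A disjunctive reduct rule `𝒞 ← [F*,] A1,…,Am`. -/
structure DRedRule (α : Type) where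
  head : List (Lit α)
  pos : List (Lit α)
  fstar : Bool

def DRedRule.bodyVal (r : DRedRule α) (I : Interp α) : V4 :=
  min (if r.fstar then V4.Fs else V4.T) (evalConj I r.pos)

def dredSat (I : Interp α) (r : DRedRule α) : Prop := r.bodyVal I ≤ evalDisj I r.head

def dredModel (I : Interp α) (Q : Set (DRedRule α)) : Prop := ∀ r ∈ Q, dredSat I r

def dxredHead (I : Interp α) (body : List (Lit α)) :
    List (List (Lit α)) → List (DRedRule α)
  | [] => []
  | [c] => [⟨c, body, false⟩]
  | c :: c' :: rest =>
    if evalDisj I c = V4.Fs then ⟨c, body, true⟩ :: dxredHead I body (c' :: rest)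
    else [⟨c, body, false⟩]

/-- The ×-reduct of a DLPOD rule w.r.t. `I`. -/
def dxredRule (I : Interp α) (R : DRule α) : List (DRedRule α) :=
  if ∃ b ∈ R.neg, I b = V4.T then [] else dxredHead I R.pos R.headList

/-- The ×-reduct of a DLPOD w.r.t. `I`. -/
def dxreduct (I : Interp α) (P : Set (DRule α)) : Set (DRedRule α) :=
  { r | ∃ R ∈ P, r ∈ dxredRule I R }

/-- `M` is an answer set of the DLPOD `P`: a consistent three-valued
interpretation that is a `≤`-minimal (three-valued) model of `P^M_×`. -/
def dAnswerSet (P : Set (DRule α)) (M : Interp α) : Prop :=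
  solid M ∧ consistentI M ∧ dredModel M (dxreduct M P) ∧
  ∀ N : Interp α, solid N → dredModel N (dxreduct M P) → interpLE N M → N = M

/-- A positive disjunctive rule `C1 ∨ ⋯ ∨ Cq ← A1,…,Am`. -/
structure DPosRule (α : Type) where
  head : List (Lit α)
  pos : List (Lit α)

/-- `N` is a two-valued model of a positive disjunctive program. -/
def dposModel (N : Set (Lit α)) (Q : Set (DPosRule α)) : Prop :=
  ∀ r ∈ Q, (∀ a ∈ r.pos, a ∈ N) → ∃ c ∈ r.head, c ∈ N

/-- The Gelfond–Lifschitz reduct of a disjunctive extended logic program (a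
DLPOD all of whose rule heads are single disjunctions). -/
def glDReduct (P : Set (DRule α)) (N : Set (Lit α)) : Set (DPosRule α) :=
  { r | ∃ R ∈ P, (∀ b ∈ R.neg, b ∉ N) ∧ r.head = R.c1 ∧ r.pos = R.pos }

/-- `N` is a standard disjunctive answer set: a consistent set of literals that
is a minimal two-valued model of `P^N`. -/
def stdDAnswerSet (P : Set (DRule α)) (N : Set (Lit α)) : Prop :=
  twoConsistent N ∧ dposModel N (glDReduct P N) ∧
  ∀ N', dposModel N' (glDReduct P N) → N' ⊆ N → N' = N

/-! ### Auxiliary lemmas -/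

lemma V4_le_T (x : V4) : x ≤ V4.T := by cases x <;> decide

lemma V4_F_le (x : V4) : V4.F ≤ x := by cases x <;> decide

lemma V4_min_T (x : V4) : min V4.T x = x := min_eq_right (V4_le_T x)

lemma V4_min_eq_T {a b : V4} : min a b = V4.T ↔ a = V4.T ∧ b = V4.T := by
  cases a <;> cases b <;> simp [min_def] <;> decide

lemma V4_max_eq_T {a b : V4} : max a b = V4.T ↔ a = V4.T ∨ b = V4.T := by
  cases a <;> cases b <;> simp [max_def] <;> decide

lemma evalConj_eq_T {I : Interp α} {L : List (Lit α)} :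
    evalConj I L = V4.T ↔ ∀ a ∈ L, I a = V4.T := by
  induction L with
  | nil => simp [evalConj]
  | cons x xs ih =>
    simp only [evalConj, List.map_cons, List.foldr_cons] at ih ⊢
    rw [V4_min_eq_T, ih]
    simp

lemma evalDisj_eq_T {I : Interp α} {L : List (Lit α)} :
    evalDisj I L = V4.T ↔ ∃ a ∈ L, I a = V4.T := by
  induction L with
  | nil => simp [evalDisj]
  | cons x xs ih =>
    simp only [evalDisj, List.map_cons, List.foldr_cons] at ih ⊢
    rw [V4_max_eq_T, ih]
    simp

lemma evalConj_le {I : Interp α} {a : Lit α} {L : List (Lit α)} (h : a ∈ L) :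
    evalConj I L ≤ I a := by
  induction L with
  | nil => simp at h
  | cons x xs ih =>
    simp only [evalConj, List.map_cons, List.foldr_cons]
    rcases List.mem_cons.1 h with rfl | h'
    · exact min_le_left _ _
    · exact le_trans (min_le_right _ _) (ih h')

lemma mem_dxreduct_iff {M : Interp α} {P : Set (DRule α)} (hDELP : ∀ R ∈ P, R.cs = [])
    {r : DRedRule α} :
    r ∈ dxreduct M P ↔
      ∃ R ∈ P, (∀ b ∈ R.neg, M b ≠ V4.T) ∧ r = ⟨R.c1, R.pos, false⟩ := by
  constructor
  · rintro ⟨R, hR, hr⟩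
    rw [dxredRule] at hr
    by_cases h : ∃ b ∈ R.neg, M b = V4.T
    · simp [h] at hr
    · rw [if_neg h, DRule.headList, hDELP R hR] at hr
      simp only [dxredHead, List.mem_singleton] at hr
      push_neg at h
      exact ⟨R, hR, h, hr⟩
  · rintro ⟨R, hR, hneg, rfl⟩
    refine ⟨R, hR, ?_⟩
    rw [dxredRule, if_neg (by push_neg; exact hneg), DRule.headList, hDELP R hR]
    simp [dxredHead]

lemma dredSat_false {I : Interp α} {h p : List (Lit α)} :
    dredSat I ⟨h, p, false⟩ ↔ evalConj I p ≤ evalDisj I h := by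
  simp [dredSat, DRedRule.bodyVal, V4_min_T]

lemma dredSat_of {I : Interp α} {h p : List (Lit α)}
    (htv : ∀ l, I l = V4.F ∨ I l = V4.T)
    (hmp : (∀ a ∈ p, I a = V4.T) → ∃ c ∈ h, I c = V4.T) :
    dredSat I ⟨h, p, false⟩ := by
  rw [dredSat_false]
  by_cases hc : ∀ a ∈ p, I a = V4.T
  · obtain ⟨c, hc1, hc2⟩ := hmp hc
    have hd : evalDisj I h = V4.T := evalDisj_eq_T.2 ⟨c, hc1, hc2⟩
    rw [hd]; exact V4_le_T _
  · push_neg at hc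
    obtain ⟨a, ha, hne⟩ := hc
    have hF : I a = V4.F := (htv a).resolve_right hne
    exact le_trans (le_trans (evalConj_le ha) hF.le) (V4_F_le _)

/-- For a consistent disjunctive extended logic program `P`
(every rule head a single disjunction, every minimal-model-of-its-own-GL-reduct
set of literals consistent), the three-valued DLPOD answer sets of `P` are
exactly the two-valued interpretations whose set of true literals is a standard
disjunctive answer set of `P`. -/
theorem dlpod_answerSet_iff_stdDAnswerSet {α : Type} (P : Set (DRule α))
    (hDELP : ∀ R ∈ P, R.cs = [])
    (hCons : ∀ N : Set (Lit α),
      (dposModel N (glDReduct P N) ∧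
        ∀ N', dposModel N' (glDReduct P N) → N' ⊆ N → N' = N) →
      twoConsistent N) :
    ∀ M : Interp α,
      dAnswerSet P M ↔ (twoValued M ∧ stdDAnswerSet P (collapse M)) := by
  intro M
  constructor
  · rintro ⟨hsolid, hcons, hmodel, hmin⟩
    classical
    -- Step 1: M is two-valued
    have htv : twoValued M := by
      set Nf : Interp α := fun l => if M l = V4.Fs then V4.F else M l with hNf
      have hNtv : ∀ l, Nf l = V4.F ∨ Nf l = V4.T := by
        intro l
        simp only [hNf]
        cases h : M l with
        | F => simp [h]
        | Fs => simp
        | Ts => exact absurd h (hsolid l)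
        | T => simp [h]
      have hNsolid : solid Nf := by
        intro l
        rcases hNtv l with h | h <;> simp [h]
      have hNle : interpLE Nf M := by
        intro l
        simp only [hNf]
        split
        · exact V4_F_le _
        · exact le_rfl
      have hNT : ∀ l, Nf l = V4.T ↔ M l = V4.T := by
        intro l
        simp only [hNf]
        split <;> simp_all
      have hNmodel : dredModel Nf (dxreduct M P) := by
        intro r hr
        obtain ⟨R, hR, hneg, rfl⟩ := (mem_dxreduct_iff hDELP).1 hr
        apply dredSat_of hNtv
        intro hall
        have hallM : ∀ a ∈ R.pos, M a = V4.T := fun a ha => (hNT a).1 (hall a ha)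
        have hs := dredSat_false.1 (hmodel _ hr)
        rw [evalConj_eq_T.2 hallM] at hs
        have hd : evalDisj M R.c1 = V4.T := le_antisymm (V4_le_T _) hs
        obtain ⟨c, hc1, hc2⟩ := evalDisj_eq_T.1 hd
        exact ⟨c, hc1, (hNT c).2 hc2⟩
      have hNfM : Nf = M := hmin Nf hNsolid hNmodel hNle
      intro l
      cases h : M l with
      | F => exact Or.inl rfl
      | Fs =>
        exfalso
        have : Nf l = V4.F := by simp [hNf, h]
        rw [hNfM, h] at this
        exact absurd this (by decide)
      | Ts => exact absurd h (hsolid l)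
      | T => exact Or.inr rfl
    refine ⟨htv, ?_, ?_, ?_⟩
    · -- twoConsistent
      intro a ⟨h1, h2⟩
      exact hcons a ⟨h1, h2⟩
    · -- dposModel
      rintro r ⟨R, hR, hnb, hh, hp⟩ hall
      have hred : (⟨R.c1, R.pos, false⟩ : DRedRule α) ∈ dxreduct M P :=
        (mem_dxreduct_iff hDELP).2 ⟨R, hR, fun b hb hT => hnb b hb hT, rfl⟩
      have hs := dredSat_false.1 (hmodel _ hred)
      have hcT : evalConj M R.pos = V4.T :=
        evalConj_eq_T.2 (fun a ha => hall a (hp ▸ ha))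
      rw [hcT] at hs
      have hd : evalDisj M R.c1 = V4.T := le_antisymm (V4_le_T _) hs
      obtain ⟨c, hc1, hc2⟩ := evalDisj_eq_T.1 hd
      exact ⟨c, hh ▸ hc1, hc2⟩
    · -- minimality
      intro N' hN'mod hsub
      classical
      set J : Interp α := fun l => if l ∈ N' then V4.T else V4.F with hJ
      have hJtv : ∀ l, J l = V4.F ∨ J l = V4.T := by
        intro l; simp only [hJ]; split
        · exact Or.inr rfl
        · exact Or.inl rfl
      have hJsolid : solid J := by
        intro l; rcases hJtv l with h | h <;> simp [h]
      have hJT : ∀ l, J l = V4.T ↔ l ∈ N' := by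
        intro l; simp only [hJ]; split <;> simp_all
      have hJmodel : dredModel J (dxreduct M P) := by
        intro r hr
        obtain ⟨R, hR, hneg, rfl⟩ := (mem_dxreduct_iff hDELP).1 hr
        apply dredSat_of hJtv
        intro hall
        have hg : (⟨R.c1, R.pos⟩ : DPosRule α) ∈ glDReduct P (collapse M) :=
          ⟨R, hR, fun b hb hbN => hneg b hb hbN, rfl, rfl⟩
        obtain ⟨c, hc1, hc2⟩ := hN'mod _ hg (fun a ha => (hJT a).1 (hall a ha))
        exact ⟨c, hc1, (hJT c).2 hc2⟩
      have hJle : interpLE J M := by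
        intro l
        simp only [hJ]
        split
        · next h =>
          have : M l = V4.T := hsub h
          rw [this]
        · exact V4_F_le _
      have hJM : J = M := hmin J hJsolid hJmodel hJle
      refine Set.Subset.antisymm hsub (fun l hl => ?_)
      have hMl : M l = V4.T := hl
      have : J l = V4.T := by rw [hJM]; exact hMl
      exact (hJT l).1 this
  · rintro ⟨htv, hcons2, hpos, hminN⟩
    have hsolid : solid M := by
      intro l; rcases htv l with h | h <;> simp [h]
    refine ⟨hsolid, ?_, ?_, ?_⟩
    · intro a ⟨h1, h2⟩
      exact hcons2 a ⟨h1, h2⟩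
    · -- dredModel M (dxreduct M P)
      intro r hr
      obtain ⟨R, hR, hneg, rfl⟩ := (mem_dxreduct_iff hDELP).1 hr
      apply dredSat_of htv
      intro hall
      have hg : (⟨R.c1, R.pos⟩ : DPosRule α) ∈ glDReduct P (collapse M) :=
        ⟨R, hR, fun b hb hbN => hneg b hb hbN, rfl, rfl⟩
      obtain ⟨c, hc1, hc2⟩ := hpos _ hg (fun a ha => hall a ha)
      exact ⟨c, hc1, hc2⟩
    · -- minimality
      intro N₀ hsol₀ hmod₀ hle₀
      have hsubS : {l | N₀ l = V4.T} ⊆ collapse M := by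
        intro l hl
        have h1 : N₀ l ≤ M l := hle₀ l
        have h2 : N₀ l = V4.T := hl
        exact le_antisymm (V4_le_T _) (h2 ▸ h1)
      have hSmod : dposModel {l | N₀ l = V4.T} (glDReduct P (collapse M)) := by
        rintro r ⟨R, hR, hnb, hh, hp⟩ hall
        have hred : (⟨R.c1, R.pos, false⟩ : DRedRule α) ∈ dxreduct M P :=
          (mem_dxreduct_iff hDELP).2 ⟨R, hR, fun b hb hT => hnb b hb hT, rfl⟩
        have hs := dredSat_false.1 (hmod₀ _ hred)
        have hcT : evalConj N₀ R.pos = V4.T :=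
          evalConj_eq_T.2 (fun a ha => hall a (hp ▸ ha))
        rw [hcT] at hs
        have hd : evalDisj N₀ R.c1 = V4.T := le_antisymm (V4_le_T _) hs
        obtain ⟨c, hc1, hc2⟩ := evalDisj_eq_T.1 hd
        exact ⟨c, hh ▸ hc1, hc2⟩
      have hSN := hminN _ hSmod hsubS
      funext l
      rcases htv l with h | h
      · have h1 : N₀ l ≤ M l := hle₀ l
        rw [h] at h1
        have h2 : N₀ l = V4.F := le_antisymm h1 (V4_F_le _)
        rw [h2, h]
      · have hlM : l ∈ collapse M := h
        rw [← hSN] at hlM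
        have : N₀ l = V4.T := hlM
        rw [this, h]
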